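/- There is no cyclic listing of all involutions of S_n, for n ≥ 3, in which every two cyclically consecutive involutions have Hamming distance exactly 2; equivalently, every Hamilton cycle on the involutions of S_n (with edges between involutions at Hamming distance ≤ 3) must contain a pair of consecutive involutions at Hamming distance 3. -/

import Mathlib

open Equiv Finset

set_option linter.unusedSectionVars false

/-- The Hamming distance between two permutations of `[n]`: the number of positions
where they differ. -/
def hammingA {n : ℕ} (π σ : Equiv.Perm (Fin n)) : ℕ :=
  (Finset.univ.filter fun i : Fin n => π i ≠ σ i).card


variable {α : Type*} [DecidableEq α] [Fintype α]

noncomputable def Dsum (α : Type*) [DecidableEq α] [Fintype α] : ℤ :=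
  ∑ σ ∈ univ.filter (fun σ : Perm α => σ * σ = 1), (Equiv.Perm.sign σ : ℤ)

lemma Dsum_congr {β : Type*} [DecidableEq β] [Fintype β] (e : α ≃ β) : Dsum α = Dsum β := by
  unfold Dsum
  refine Finset.sum_nbij' (fun σ => e.permCongr σ) (fun τ => e.symm.permCongr τ) ?_ ?_ ?_ ?_ ?_
  · intro σ hσ
    simp only [mem_filter, mem_univ, true_and] at hσ ⊢
    ext x
    have := congrArg (fun f : Perm α => f (e.symm x)) hσ
    simp only [Equiv.permCongr_apply, Perm.mul_apply, Perm.one_apply] at this ⊢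
    rw [Equiv.symm_apply_apply, this, Equiv.apply_symm_apply]
  · intro τ hτ
    simp only [mem_filter, mem_univ, true_and] at hτ ⊢
    ext x
    have := congrArg (fun f : Perm β => f (e x)) hτ
    simp only [Equiv.permCongr_apply, Perm.mul_apply, Perm.one_apply, Equiv.symm_symm] at this ⊢
    rw [Equiv.apply_symm_apply, this, Equiv.symm_apply_apply]
  · intro σ _; ext x; simp
  · intro τ _; ext x; simp
  · intro σ _; rw [Equiv.Perm.sign_permCongr]


lemma fix_iff {e : Perm α} {a : α} (he : e a = a) : ∀ x, x ≠ a ↔ e x ≠ a := by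
  intro x
  constructor
  · intro hx h
    exact hx (e.injective (h.trans he.symm))
  · intro hx h
    exact hx (by rw [h, he])

lemma sum_fixing (a : α) :
    ∑ e ∈ univ.filter (fun e : Perm α => e a = a ∧ e * e = 1), (Equiv.Perm.sign e : ℤ)
      = Dsum {x : α // x ≠ a} := by
  unfold Dsum
  refine (Finset.sum_bij' (fun (u : Perm {x : α // x ≠ a}) _ => Equiv.Perm.ofSubtype u)
    (fun e he => e.subtypePerm (fun x => (fix_iff (Finset.mem_filter.mp he).2.1 x).symm)) ?_ ?_ ?_ ?_ ?_).symm
  · intro u hu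
    simp only [mem_filter, mem_univ, true_and] at hu ⊢
    constructor
    · exact Equiv.Perm.ofSubtype_apply_of_not_mem u (by simp)
    · rw [← map_mul, hu, map_one]
  · intro e he
    simp only [mem_filter, mem_univ, true_and] at he ⊢
    ext x
    have hx := congrArg (fun f : Perm α => f (x : α)) he.2
    simp only [Equiv.Perm.mul_apply, Equiv.Perm.one_apply] at hx
    exact hx
  · intro u hu
    ext x
    simp [Equiv.Perm.subtypePerm_apply, Equiv.Perm.ofSubtype_apply_of_mem u x.2]
  · intro e he
    simp only [mem_filter, mem_univ, true_and] at he
    refine Equiv.Perm.ofSubtype_subtypePerm _ (fun x hx => ?_)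
    intro hxa
    subst hxa
    exact hx he.1
  · intro u hu
    rw [Equiv.Perm.sign_ofSubtype]

lemma optionCongr_mul (e f : Perm α) :
    e.optionCongr * f.optionCongr = (e * f : Perm α).optionCongr := by
  ext x; cases x <;> simp

lemma inv_decompose_none (e : Perm α) :
    (Equiv.Perm.decomposeOption.symm (none, e)) * (Equiv.Perm.decomposeOption.symm (none, e)) = 1
      ↔ e * e = 1 := by
  simp only [Equiv.Perm.decomposeOption_symm_apply, Equiv.swap_self]
  rw [show (Equiv.refl (Option α) : Perm (Option α)) = 1 from rfl, one_mul, optionCongr_mul]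
  constructor
  · intro h
    apply Equiv.optionCongr_injective
    rw [h]; ext x; cases x <;> simp
  · intro h
    rw [h]; ext x; cases x <;> simp

lemma swap_opt_key (a : α) (e : Perm α) (hea : e a = a) :
    Equiv.swap (none : Option α) (some a) * e.optionCongr *
      (Equiv.swap (none : Option α) (some a) * e.optionCongr)
      = e.optionCongr * e.optionCongr := by
  set s : Perm (Option α) := Equiv.swap (none : Option α) (some a) with hs
  set E : Perm (Option α) := e.optionCongr with hE
  have hcomm : E * s = s * E := by
    ext x
    rcases x with _ | b
    · simp [hs, hE, hea]
    · by_cases hb : b = a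
      · subst hb; simp [hs, hE, hea]
      · have h1 : (some b : Option α) ≠ none := by simp
        have h2 : (some b : Option α) ≠ some a := by simpa using hb
        have h3 : (some (e b) : Option α) ≠ none := by simp
        have h4 : (some (e b) : Option α) ≠ some a := by
          simp only [ne_eq, Option.some.injEq]
          intro hc; exact hb (e.injective (hc.trans hea.symm))
        simp [hs, hE, Equiv.swap_apply_of_ne_of_ne h1 h2, Equiv.swap_apply_of_ne_of_ne h3 h4]
  have h3 : E * (s * E) = s * (E * E) := by rw [← mul_assoc, hcomm, mul_assoc]
  calc s * E * (s * E) = s * (E * (s * E)) := by rw [mul_assoc]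
    _ = s * (s * (E * E)) := by rw [h3]
    _ = s * s * (E * E) := by rw [← mul_assoc]
    _ = E * E := by rw [hs, Equiv.swap_mul_self, one_mul]

lemma inv_decompose_some (a : α) (e : Perm α) :
    (Equiv.Perm.decomposeOption.symm (some a, e)) * (Equiv.Perm.decomposeOption.symm (some a, e)) = 1
      ↔ (e a = a ∧ e * e = 1) := by
  simp only [Equiv.Perm.decomposeOption_symm_apply]
  constructor
  · intro h
    have hnone := congrArg (fun f : Perm (Option α) => f none) h
    simp only [Equiv.Perm.mul_apply, Equiv.Perm.one_apply, Equiv.optionCongr_apply,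
      Option.map_none, Equiv.swap_apply_left, Option.map_some] at hnone
    have hea : e a = a := by
      by_cases hea : e a = a
      · exact hea
      · exfalso
        rw [Equiv.swap_apply_of_ne_of_ne (by simp) (by simpa using hea)] at hnone
        simp at hnone
    refine ⟨hea, ?_⟩
    rw [swap_opt_key a e hea, optionCongr_mul] at h
    apply Equiv.optionCongr_injective
    rw [h]; ext x; cases x <;> simp
  · rintro ⟨hea, h⟩
    rw [swap_opt_key a e hea, optionCongr_mul, h]
    ext x; cases x <;> simp

lemma Dsum_option : Dsum (Option α) = Dsum α - ∑ a : α, Dsum {x : α // x ≠ a} := by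
  have h1 : Dsum (Option α) = ∑ pe : Option α × Perm α,
      if (Equiv.Perm.decomposeOption.symm pe) * (Equiv.Perm.decomposeOption.symm pe) = 1 then
        (Equiv.Perm.sign (Equiv.Perm.decomposeOption.symm pe) : ℤ) else 0 := by
    rw [Dsum, Finset.sum_filter]
    exact Fintype.sum_equiv Equiv.Perm.decomposeOption _ _ (fun σ => by simp)
  rw [h1, Fintype.sum_prod_type, Fintype.sum_option]
  have hnone : ∑ e : Perm α,
      (if (Equiv.Perm.decomposeOption.symm ((none : Option α), e)) *
          (Equiv.Perm.decomposeOption.symm ((none : Option α), e)) = 1 then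
        (Equiv.Perm.sign (Equiv.Perm.decomposeOption.symm ((none : Option α), e)) : ℤ) else 0)
      = Dsum α := by
    rw [Dsum, Finset.sum_filter]
    refine Finset.sum_congr rfl (fun e _ => ?_)
    rw [if_congr (inv_decompose_none e) rfl rfl]
    split_ifs with h
    · rw [Equiv.Perm.decomposeOption_symm_sign]
    · rfl
  rw [hnone]
  have hsome : ∀ a : α, ∑ e : Perm α,
      (if (Equiv.Perm.decomposeOption.symm (some a, e)) *
          (Equiv.Perm.decomposeOption.symm (some a, e)) = 1 then
        (Equiv.Perm.sign (Equiv.Perm.decomposeOption.symm (some a, e)) : ℤ) else 0)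
      = - Dsum {x : α // x ≠ a} := by
    intro a
    rw [← sum_fixing a, Finset.sum_filter, ← Finset.sum_neg_distrib]
    refine Finset.sum_congr rfl (fun e _ => ?_)
    rw [if_congr (inv_decompose_some a e) rfl rfl]
    split_ifs with h
    · have hsign : Equiv.Perm.sign (Equiv.Perm.decomposeOption.symm (some a, e))
          = - Equiv.Perm.sign e := by
        rw [Equiv.Perm.decomposeOption_symm_apply, map_mul, Equiv.Perm.sign_swap (by simp),
          Equiv.optionCongr_sign, neg_one_mul]
      rw [hsign]
      push_cast
      ring
    · simp
  rw [Finset.sum_congr rfl (fun a _ => hsome a), Finset.sum_neg_distrib]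
  ring

noncomputable def fD (m : ℕ) : ℤ := Dsum (Fin m)

lemma fD_rec (m : ℕ) : fD (m + 2) = fD (m + 1) - (m + 1) * fD m := by
  have h1 : fD (m + 2) = Dsum (Option (Fin (m + 1))) :=
    Dsum_congr (finSuccEquiv (m + 1)).symm.symm
  rw [h1, Dsum_option]
  have h2 : ∀ a : Fin (m + 1), Dsum {x : Fin (m + 1) // x ≠ a} = fD m := by
    intro a
    have hc : Fintype.card {x : Fin (m + 1) // x ≠ a} = m := by
      simp [Fintype.card_subtype_compl]
    exact (Dsum_congr (Fintype.equivFinOfCardEq hc)).trans rfl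
  rw [Finset.sum_congr rfl (fun a _ => h2 a), Finset.sum_const, Finset.card_univ,
    Fintype.card_fin, nsmul_eq_mul]
  push_cast
  rfl

lemma fD_zero : fD 0 = 1 := by
  rw [fD, Dsum]
  rw [show (univ : Finset (Perm (Fin 0))) = {1} from Finset.eq_singleton_iff_unique_mem.mpr
    ⟨Finset.mem_univ 1, fun σ _ => Subsingleton.elim σ 1⟩]
  simp [Finset.filter_singleton]

lemma fD_one : fD 1 = 1 := by
  rw [fD, Dsum]
  rw [show (univ : Finset (Perm (Fin 1))) = {1} from Finset.eq_singleton_iff_unique_mem.mpr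
    ⟨Finset.mem_univ 1, fun σ _ => Subsingleton.elim σ 1⟩]
  simp [Finset.filter_singleton]

lemma fD_mod3 : ∀ m : ℕ, ((fD m : ZMod 3) = if m % 3 = 2 then 0 else 1) := by
  intro m
  induction m using Nat.strong_induction_on with
  | _ m ih =>
    match m with
    | 0 => simp [fD_zero]
    | 1 => simp [fD_one]
    | (k + 2) =>
      have h1 := ih (k + 1) (by omega)
      have h0 := ih k (by omega)
      have hrec := fD_rec k
      have hcast : ((fD (k + 2) : ℤ) : ZMod 3)
          = ((fD (k+1) : ℤ) : ZMod 3) - ((k : ZMod 3) + 1) * ((fD k : ℤ) : ZMod 3) := by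
        rw [hrec]
        push_cast
        ring
      rw [hcast, h1, h0]
      have h3 : (k % 3 < 3) := Nat.mod_lt _ (by norm_num)
      have hk : ((k : ZMod 3)) = ((k % 3 : ℕ) : ZMod 3) := (ZMod.natCast_mod k 3).symm
      interval_cases h : k % 3 <;>
        simp_all [Nat.add_mod, h] <;> decide

lemma fD_ne_zero {n : ℕ} (hn : 3 ≤ n) : fD n ≠ 0 := by
  by_cases h2 : n % 3 = 2
  · obtain ⟨j, rfl⟩ : ∃ j, n = 3 * j + 5 := ⟨(n - 5) / 3, by omega⟩
    have e1 : fD (3*j + 5) = fD (3*j + 4) - (((3*j+3 : ℕ) : ℤ) + 1) * fD (3*j + 3) := by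
      rw [show 3*j + 5 = (3*j+3) + 2 by omega, show 3*j + 4 = (3*j+3) + 1 by omega]
      exact fD_rec _
    have e2 : fD (3*j + 4) = fD (3*j + 3) - (((3*j+2 : ℕ) : ℤ) + 1) * fD (3*j + 2) := by
      rw [show 3*j + 4 = (3*j+2) + 2 by omega, show 3*j + 3 = (3*j+2) + 1 by omega]
      exact fD_rec _
    have key : fD (3*j + 5) = -(((3*j+3 : ℕ) : ℤ)) * (fD (3*j + 3) + fD (3*j + 2)) := by
      rw [e1, e2]
      push_cast
      ring
    have hm : (((3*j+3 : ℕ) : ℤ)) ≠ 0 := by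
      exact_mod_cast (by omega : (3*j+3 : ℕ) ≠ 0)
    have hsum : fD (3*j + 3) + fD (3*j + 2) ≠ 0 := by
      intro h
      have hc := congrArg (fun z : ℤ => (z : ZMod 3)) h
      push_cast at hc
      rw [fD_mod3, fD_mod3] at hc
      rw [if_neg (by omega), if_pos (by omega)] at hc
      norm_num at hc
    rw [key]
    exact mul_ne_zero (neg_ne_zero.mpr hm) hsum
  · intro h
    have hc := fD_mod3 n
    rw [h, if_neg h2] at hc
    norm_num at hc

lemma sign_flip_of_hamming {n : ℕ} {π σ : Equiv.Perm (Fin n)} (h : hammingA π σ = 2) :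
    Equiv.Perm.sign σ = - Equiv.Perm.sign π := by
  set τ : Perm (Fin n) := π⁻¹ * σ with hτ
  have hsupp : τ.support = Finset.univ.filter fun i : Fin n => π i ≠ σ i := by
    ext i
    simp only [Equiv.Perm.mem_support, mem_filter, mem_univ, true_and, hτ,
      Equiv.Perm.mul_apply]
    constructor
    · intro hi hc
      exact hi (by rw [← hc]; exact π.symm_apply_apply i)
    · intro hi hc
      exact hi ((π.apply_symm_apply (σ i)).symm.trans (congrArg π hc)).symm
  have hcard : τ.support.card = 2 := by rw [hsupp]; exact h
  obtain ⟨a, b, hab, hswap⟩ := Equiv.Perm.card_support_eq_two.mp hcard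
  have hsign : Equiv.Perm.sign τ = -1 := by rw [hswap, Equiv.Perm.sign_swap hab]
  have hστ : σ = π * τ := by rw [hτ, ← mul_assoc, mul_inv_cancel, one_mul]
  rw [hστ, map_mul, hsign, mul_neg, mul_one]

lemma list_sum_getD {β M : Type*} [AddCommMonoid M] (l : List β) (f : β → M) (d : β) :
    (l.map f).sum = ∑ i ∈ Finset.range l.length, f (l.getD i d) := by
  induction l with
  | nil => simp
  | cons a l ih =>
    rw [List.map_cons, List.sum_cons, List.length_cons, Finset.sum_range_succ']
    simp only [List.getD_cons_succ, List.getD_cons_zero]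
    rw [ih]
    exact (add_comm _ _)

lemma sum_neg_one_pow_int (k : ℕ) : ∑ i ∈ Finset.range (2 * k), ((-1 : ℤ)) ^ i = 0 := by
  induction k with
  | zero => simp
  | succ k ih =>
    rw [show 2 * (k + 1) = (2 * k + 1) + 1 by omega, Finset.sum_range_succ,
      Finset.sum_range_succ, ih, pow_succ]
    ring

/-- For `n ≥ 3` there is no cyclic listing of all involutions of `S_n` in which every
two cyclically consecutive involutions have Hamming distance exactly `2`. -/
theorem no_distance_two_hamilton_cycle_A (n : ℕ) (hn : 3 ≤ n) :
    ¬ ∃ L : List (Equiv.Perm (Fin n)),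
      L.Nodup ∧ (∀ π : Equiv.Perm (Fin n), π ∈ L ↔ π * π = 1) ∧
      (∀ i : ℕ, i + 1 < L.length → hammingA (L.getD i 1) (L.getD (i + 1) 1) = 2) ∧
      hammingA (L.getD (L.length - 1) 1) (L.getD 0 1) = 2 := by
  rintro ⟨L, hnd, hmem, hadj, hcyc⟩
  set len := L.length with hlen
  have h1L : (1 : Perm (Fin n)) ∈ L := (hmem 1).mpr (one_mul 1)
  have hlen1 : 1 ≤ len := List.length_pos_iff.mpr (List.ne_nil_of_mem h1L)
  have hself : hammingA (L.getD 0 1) (L.getD 0 1) = 0 := by simp [hammingA]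
  have hlen2 : 2 ≤ len := by
    rcases Nat.lt_or_ge len 2 with h | h
    · exfalso
      have e : len - 1 = 0 := by omega
      rw [e] at hcyc
      exact absurd (hcyc.symm.trans hself) (by norm_num)
    · exact h
  set s : ℕ → ℤˣ := fun i => Equiv.Perm.sign (L.getD i 1) with hs
  have halt : ∀ i, i + 1 < len → s (i + 1) = - s i :=
    fun i hi => sign_flip_of_hamming (hadj i hi)
  have hpow : ∀ i, i < len → s i = (-1) ^ i * s 0 := by
    intro i
    induction i with
    | zero => intro _; simp
    | succ k ih =>
      intro hk
      rw [halt k hk, ih (by omega), pow_succ, mul_neg_one, neg_mul]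
  have hclose : s (len - 1) = - s 0 := by
    have h := sign_flip_of_hamming hcyc
    show Equiv.Perm.sign (L.getD (len - 1) 1) = - Equiv.Perm.sign (L.getD 0 1)
    rw [h, neg_neg]
  have hlenpow : ((-1 : ℤˣ)) ^ (len - 1) = -1 := by
    have h1 := hpow (len - 1) (by omega)
    rw [hclose] at h1
    have h2 : (-1 : ℤˣ) * s 0 = (-1) ^ (len - 1) * s 0 := by rw [neg_one_mul]; exact h1
    exact (mul_right_cancel h2).symm
  have hodd : Odd (len - 1) := by
    rcases Nat.even_or_odd (len - 1) with he | ho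
    · exfalso
      rw [he.neg_one_pow] at hlenpow
      exact (by decide : (1 : ℤˣ) ≠ -1) hlenpow
    · exact ho
  obtain ⟨k, hk⟩ := hodd
  have hlen_eq : len = 2 * (k + 1) := by omega
  have hset : L.toFinset = Finset.univ.filter (fun σ : Perm (Fin n) => σ * σ = 1) := by
    ext σ
    simp [List.mem_toFinset, hmem σ]
  have hDn : fD n = ∑ i ∈ Finset.range len, ((s i : ℤˣ) : ℤ) := by
    rw [fD, Dsum, ← hset, List.sum_toFinset _ hnd,
      list_sum_getD L (fun σ => ((Equiv.Perm.sign σ : ℤˣ) : ℤ)) 1]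
  have hzero : ∑ i ∈ Finset.range len, ((s i : ℤˣ) : ℤ) = 0 := by
    have hterm : ∀ i ∈ Finset.range len, ((s i : ℤˣ) : ℤ) = (-1) ^ i * ((s 0 : ℤˣ) : ℤ) := by
      intro i hi
      rw [hpow i (Finset.mem_range.mp hi)]
      push_cast
      ring
    rw [Finset.sum_congr rfl hterm, ← Finset.sum_mul, hlen_eq, sum_neg_one_pow_int, zero_mul]
  exact fD_ne_zero hn (hDn.trans hzero)
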